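/- If T is a positive bounded linear operator on a complex Hilbert space, x is a unit vector, and p ≥ 1, then ⟨T x, x⟩^p ≤ ⟨T^p x, x⟩. -/

import Mathlib

set_option maxHeartbeats 1000000

open scoped InnerProductSpace NNReal

private theorem scalar_tangent' {a t p : ℝ} (ha : 0 ≤ a) (ht : 0 ≤ t) (hp : 1 ≤ p) :
    a ^ p + p * a ^ (p - 1) * t ≤ t ^ p + p * a ^ p := by
  rcases ha.eq_or_lt with rfl | ha
  · rcases hp.eq_or_lt with rfl | hp
    · simp [Real.rpow_one]
    · rw [Real.zero_rpow (by linarith), Real.zero_rpow (by linarith)]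
      have : 0 ≤ t ^ p := Real.rpow_nonneg ht p
      linarith
  · have hs : (-1 : ℝ) ≤ t / a - 1 := by
      have : 0 ≤ t / a := div_nonneg ht ha.le
      linarith
    have hb := one_add_mul_self_le_rpow_one_add hs hp
    have h1 : 1 + (t / a - 1) = t / a := by ring
    rw [h1, Real.div_rpow ht ha.le] at hb
    have hap : 0 < a ^ p := Real.rpow_pos_of_pos ha p
    have h3 : a ^ p * (1 + p * (t / a - 1)) ≤ t ^ p := by
      rw [mul_comm]
      exact (le_div_iff₀ hap).mp hb
    have h4 : a ^ p / a = a ^ (p - 1) := by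
      rw [Real.rpow_sub ha, Real.rpow_one]
    have h5 : a ^ p * (t / a) = a ^ (p - 1) * t := by
      rw [← h4]; field_simp
    have h6 : a ^ p * (1 + p * (t / a - 1)) = a ^ p + p * (a ^ p * (t / a)) - p * a ^ p := by
      ring
    rw [h6, h5] at h3
    linarith

private theorem rpow_sub_one_mul' {a p : ℝ} (ha : 0 ≤ a) (hp : 1 ≤ p) :
    a ^ (p - 1) * a = a ^ p := by
  rcases ha.eq_or_lt with rfl | ha
  · rw [mul_zero, Real.zero_rpow (by linarith)]
  · rw [← Real.rpow_add_one ha.ne' (p - 1), sub_add_cancel]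

private theorem re_inner_algebraMap' {H : Type*} [NormedAddCommGroup H]
    [InnerProductSpace ℂ H] [CompleteSpace H] (x : H) (r : ℝ≥0) :
    (⟪(algebraMap ℝ≥0 (H →L[ℂ] H) r) x, x⟫_ℂ).re = (r : ℝ) * (⟪x, x⟫_ℂ).re := by
  rw [Algebra.algebraMap_eq_smul_one]
  simp [NNReal.smul_def, ← Complex.coe_smul, inner_smul_left]
  ring

private theorem re_inner_smul' {H : Type*} [NormedAddCommGroup H]
    [InnerProductSpace ℂ H] [CompleteSpace H] (S : H →L[ℂ] H) (x : H) (r : ℝ≥0) :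
    (⟪(r • S) x, x⟫_ℂ).re = (r : ℝ) * (⟪S x, x⟫_ℂ).re := by
  simp [NNReal.smul_def, ← Complex.coe_smul, inner_smul_left]
  ring

/-- McCarthy's inequality: for a positive operator `T`, a unit vector `x` and `p ≥ 1`,
`⟨T x, x⟩ ^ p ≤ ⟨T^p x, x⟩`. -/
theorem stmt_2 {H : Type*} [NormedAddCommGroup H] [InnerProductSpace ℂ H] [CompleteSpace H]
    (T : H →L[ℂ] H) (hT : 0 ≤ T) (x : H) (hx : ‖x‖ = 1) (p : ℝ) (hp : 1 ≤ p) :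
    (⟪T x, x⟫_ℂ).re ^ p ≤ (⟪(CFC.rpow T p) x, x⟫_ℂ).re := by
  have hTpos : T.IsPositive := (ContinuousLinearMap.nonneg_iff_isPositive T).mp hT
  have ha : 0 ≤ (⟪T x, x⟫_ℂ).re := (Complex.le_def.mp (hTpos.inner_nonneg_left x)).1
  have hxx : (⟪x, x⟫_ℂ).re = 1 := by
    rw [inner_self_eq_norm_sq_to_K (𝕜 := ℂ) x, hx]
    norm_num
  obtain ⟨c, hc⟩ : ∃ c : ℝ≥0, (c : ℝ) = (⟪T x, x⟫_ℂ).re := ⟨⟨_, ha⟩, rfl⟩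
  obtain ⟨q, hq⟩ : ∃ q : ℝ≥0, (q : ℝ) = p := ⟨⟨p, by linarith⟩, rfl⟩
  have key : cfc (fun t : ℝ≥0 => c ^ p + (q * c ^ (p - 1)) * t) T
      ≤ cfc (fun t : ℝ≥0 => t ^ p + q * c ^ p) T := by
    refine cfc_mono (fun t _ => ?_)
      (continuous_const.add (continuous_const.mul continuous_id)).continuousOn
      ((NNReal.continuous_rpow_const (by linarith)).add continuous_const).continuousOn
    rw [← NNReal.coe_le_coe]
    push_cast [NNReal.coe_rpow, hc, hq]
    have h := scalar_tangent' (a := (⟪T x, x⟫_ℂ).re) (t := (t : ℝ)) ha t.coe_nonneg hp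
    linarith [h]
  rw [cfc_add T (fun _ => c ^ p) (fun t => (q * c ^ (p - 1)) * t)
      continuous_const.continuousOn (continuous_const.mul continuous_id).continuousOn,
    cfc_const _ _ hT, cfc_const_mul_id _ _ hT,
    cfc_add T (fun t : ℝ≥0 => t ^ p) (fun _ => q * c ^ p)
      (NNReal.continuous_rpow_const (by linarith)).continuousOn continuous_const.continuousOn,
    cfc_const _ _ hT, ← CFC.rpow_def] at key
  rw [ContinuousLinearMap.le_def] at key
  have hin : (0 : ℝ) ≤ (⟪(CFC.rpow T p + algebraMap ℝ≥0 (H →L[ℂ] H) (q * c ^ p)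
      - (algebraMap ℝ≥0 (H →L[ℂ] H) (c ^ p) + (q * c ^ (p - 1)) • T)) x, x⟫_ℂ).re :=
    (Complex.le_def.mp (key.inner_nonneg_left x)).1
  rw [ContinuousLinearMap.sub_apply, ContinuousLinearMap.add_apply,
    ContinuousLinearMap.add_apply, inner_sub_left, inner_add_left, inner_add_left,
    Complex.sub_re, Complex.add_re, Complex.add_re, re_inner_algebraMap', re_inner_algebraMap',
    re_inner_smul', hxx] at hin
  have e3 : ((q * c ^ p : ℝ≥0) : ℝ) = p * (⟪T x, x⟫_ℂ).re ^ p := by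
    push_cast [NNReal.coe_rpow, hc, hq]; ring
  have e4 : ((c ^ p : ℝ≥0) : ℝ) = (⟪T x, x⟫_ℂ).re ^ p := by
    push_cast [NNReal.coe_rpow, hc]; ring
  have e5 : ((q * c ^ (p - 1) : ℝ≥0) : ℝ) * (⟪T x, x⟫_ℂ).re = p * (⟪T x, x⟫_ℂ).re ^ p := by
    push_cast [NNReal.coe_rpow, hc, hq]
    rw [mul_assoc, rpow_sub_one_mul' ha hp]
  rw [e3, e4, e5] at hin
  linarith
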